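/- Let X be a measurable space, k : X × X → ℝ a symmetric measurable kernel, and z₀ ∈ X. Define the one-point centered kernel k°(x,y) = k(x,y) − k(x,z₀) − k(z₀,y) + k(z₀,z₀). For probability measures P, Q on X for which all the relevant integrals are finite, the three-term discrepancy is unchanged by centering: ∬ k dP dP + ∬ k dQ dQ − 2 ∬ k dP dQ = ∬ k° dP dP + ∬ k° dQ dQ − 2 ∬ k° dP dQ. -/
import Mathlib


open MeasureTheory

/-- The one-point centered kernel `k°(x,y) = k(x,y) − k(x,z₀) − k(z₀,y) + k(z₀,z₀)`. -/
def centeredKernel {X : Type*} (k : X → X → ℝ) (z₀ : X) (x y : X) : ℝ :=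
  k x y - k x z₀ - k z₀ y + k z₀ z₀

lemma integral_centered {X : Type*} [MeasurableSpace X] (k : X → X → ℝ)
    (z₀ : X) (μ ν : Measure X) [IsProbabilityMeasure μ] [IsProbabilityMeasure ν]
    (hμν : Integrable (fun z : X × X => k z.1 z.2) (μ.prod ν))
    (hμz : Integrable (fun x => k x z₀) μ) (hzν : Integrable (fun y => k z₀ y) ν) :
    (∫ z : X × X, centeredKernel k z₀ z.1 z.2 ∂(μ.prod ν)) =
      (∫ z : X × X, k z.1 z.2 ∂(μ.prod ν)) - (∫ x, k x z₀ ∂μ) - (∫ y, k z₀ y ∂ν)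
        + k z₀ z₀ := by
  have hfst : MeasurePreserving Prod.fst (μ.prod ν) μ :=
    ⟨measurable_fst, by simp⟩
  have hsnd : MeasurePreserving Prod.snd (μ.prod ν) ν :=
    ⟨measurable_snd, by simp⟩
  have h1 : Integrable (fun z : X × X => k z.1 z₀) (μ.prod ν) :=
    (hfst.integrable_comp hμz.aestronglyMeasurable).mpr hμz
  have h2 : Integrable (fun z : X × X => k z₀ z.2) (μ.prod ν) :=
    (hsnd.integrable_comp hzν.aestronglyMeasurable).mpr hzν
  have e1 : (∫ z : X × X, k z.1 z₀ ∂(μ.prod ν)) = ∫ x, k x z₀ ∂μ := by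
    rw [integral_fun_fst (f := fun x => k x z₀)]; simp
  have e2 : (∫ z : X × X, k z₀ z.2 ∂(μ.prod ν)) = ∫ y, k z₀ y ∂ν := by
    rw [integral_fun_snd (f := fun y => k z₀ y)]; simp
  unfold centeredKernel
  rw [integral_add (f := fun z : X × X => k z.1 z.2 - k z.1 z₀ - k z₀ z.2)
      (g := fun _ => k z₀ z₀) ((hμν.sub h1).sub h2) (integrable_const _),
    integral_sub (f := fun z : X × X => k z.1 z.2 - k z.1 z₀)
      (g := fun z : X × X => k z₀ z.2) (hμν.sub h1) h2,
    integral_sub hμν h1, e1, e2]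
  simp

/-- The three-term kernel discrepancy is unchanged by one-point centering:
`∬ k dP dP + ∬ k dQ dQ − 2∬ k dP dQ = ∬ k° dP dP + ∬ k° dQ dQ − 2∬ k° dP dQ`. -/
theorem kernel_discrepancy_centering_invariant
    {X : Type*} [MeasurableSpace X] (k : X → X → ℝ)
    (hk : Measurable fun z : X × X => k z.1 z.2)
    (hsymm : ∀ x y, k x y = k y x) (z₀ : X)
    (P Q : Measure X) [IsProbabilityMeasure P] [IsProbabilityMeasure Q]
    (hPP : Integrable (fun z : X × X => k z.1 z.2) (P.prod P))
    (hQQ : Integrable (fun z : X × X => k z.1 z.2) (Q.prod Q))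
    (hPQ : Integrable (fun z : X × X => k z.1 z.2) (P.prod Q))
    (hPz : Integrable (fun x => k x z₀) P) (hQz : Integrable (fun x => k x z₀) Q)
    (hzP : Integrable (fun y => k z₀ y) P) (hzQ : Integrable (fun y => k z₀ y) Q) :
    (∫ z : X × X, k z.1 z.2 ∂(P.prod P)) + (∫ z : X × X, k z.1 z.2 ∂(Q.prod Q)) -
        2 * ∫ z : X × X, k z.1 z.2 ∂(P.prod Q) =
      (∫ z : X × X, centeredKernel k z₀ z.1 z.2 ∂(P.prod P)) +
          (∫ z : X × X, centeredKernel k z₀ z.1 z.2 ∂(Q.prod Q)) -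
        2 * ∫ z : X × X, centeredKernel k z₀ z.1 z.2 ∂(P.prod Q) := by
  rw [integral_centered k z₀ P P hPP hPz hzP,
    integral_centered k z₀ Q Q hQQ hQz hzQ,
    integral_centered k z₀ P Q hPQ hPz hzQ]
  have hP : (∫ x, k x z₀ ∂P) = ∫ y, k z₀ y ∂P := by
    simp_rw [hsymm _ z₀]
  have hQ : (∫ x, k x z₀ ∂Q) = ∫ y, k z₀ y ∂Q := by
    simp_rw [hsymm _ z₀]
  rw [hP, hQ]; ring
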